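/- The graph X of f(x) = |x|·|log|x|| (with f(0)=0) is not Lipschitz normally embedded at 0; that is, for every neighborhood U of 0 and every C ≥ 1 there exist points x₁, x₂ ∈ X ∩ U with d_{X∩U, inn}(x₁, x₂) > C‖x₁ − x₂‖. -/

import Mathlib

open Set Metric ENNReal Topology

/-- The inner (length) distance on a subset `X` of a normed space. -/
noncomputable def innerDist {E : Type*} [NormedAddCommGroup E] (X : Set E) (x y : E) : ℝ≥0∞ :=
  ⨅ γ ∈ {γ : ℝ → E | ContinuousOn γ (Set.Icc 0 1) ∧ γ 0 = x ∧ γ 1 = y ∧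
      ∀ t ∈ Set.Icc (0:ℝ) 1, γ t ∈ X}, eVariationOn γ (Set.Icc 0 1)

/-- `f(x) = |x|·|log |x||` (with `f(0) = 0`, since `Real.log 0 = 0`). -/
noncomputable def flog (x : ℝ) : ℝ := |x| * abs (Real.log |x|)

/-- The graph of `f(x) = |x|·|log|x||` is not Lipschitz normally embedded at `0`: for every
neighbourhood `U` of the origin and every `C ≥ 1` there are points `p, q` of the graph in `U`
whose inner distance in the graph exceeds `C‖p − q‖`. -/
theorem stmt_6 :
    ∀ U ∈ 𝓝 ((0, 0) : ℝ × ℝ), ∀ C : ℝ, 1 ≤ C →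
      ∃ p ∈ {p : ℝ × ℝ | p.2 = flog p.1} ∩ U, ∃ q ∈ {p : ℝ × ℝ | p.2 = flog p.1} ∩ U,
        ENNReal.ofReal (C * ‖p - q‖) < innerDist ({p : ℝ × ℝ | p.2 = flog p.1} ∩ U) p q := by
  intro U hU C hC
  obtain ⟨ε, hε, hball⟩ := Metric.mem_nhds_iff.mp hU
  -- choose a large parameter t
  have h1 : ∀ᶠ t : ℝ in Filter.atTop, Real.exp (-t) < ε :=
    (Real.tendsto_exp_neg_atTop_nhds_zero.eventually (gt_mem_nhds hε))
  have h2 : ∀ᶠ t : ℝ in Filter.atTop, t ^ 1 * Real.exp (-t) < ε :=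
    ((Real.tendsto_pow_mul_exp_neg_atTop_nhds_zero 1).eventually (gt_mem_nhds hε))
  have h3 : ∀ᶠ t : ℝ in Filter.atTop, C < t := Filter.eventually_gt_atTop C
  obtain ⟨t, ht1, ht2, ht3⟩ := (h1.and (h2.and h3)).exists
  rw [pow_one] at ht2
  set x : ℝ := Real.exp (-t) with hx
  have hx0 : 0 < x := Real.exp_pos _
  have ht0 : 0 < t := lt_of_le_of_lt (le_trans zero_le_one hC) ht3
  have hflogx : flog x = t * x := by
    rw [flog, abs_of_pos hx0, hx, Real.log_exp, abs_neg, abs_of_pos ht0, mul_comm]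
  have hflognx : flog (-x) = t * x := by
    rw [flog, abs_neg, abs_of_pos hx0, hx, Real.log_exp, abs_neg, abs_of_pos ht0, mul_comm]
  set p : ℝ × ℝ := (x, t * x) with hp
  set q : ℝ × ℝ := (-x, t * x) with hq
  set X : Set (ℝ × ℝ) := {p : ℝ × ℝ | p.2 = flog p.1} ∩ U with hX
  have hpU : p ∈ U := by
    apply hball
    simp only [Metric.mem_ball, Prod.dist_eq, hp]
    simp only [Real.dist_eq, sub_zero]
    rw [abs_of_pos hx0, abs_of_pos (mul_pos ht0 hx0)]
    exact max_lt ht1 ht2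
  have hqU : q ∈ U := by
    apply hball
    simp only [Metric.mem_ball, Prod.dist_eq, hq]
    simp only [Real.dist_eq, sub_zero]
    rw [abs_neg, abs_of_pos hx0, abs_of_pos (mul_pos ht0 hx0)]
    exact max_lt ht1 ht2
  have hpX : p ∈ X := ⟨hflogx.symm, hpU⟩
  have hqX : q ∈ X := ⟨hflognx.symm, hqU⟩
  refine ⟨p, hpX, q, hqX, ?_⟩
  -- ‖p - q‖ = 2x
  have hnorm : ‖p - q‖ = 2 * x := by
    have : p - q = (2 * x, 0) := by
      simp [hp, hq, Prod.ext_iff]; ring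
    rw [this, Prod.norm_def]
    simp [abs_of_pos (by positivity : (0:ℝ) < 2 * x)]
    positivity
  -- lower bound for inner distance
  have key : ENNReal.ofReal (2 * (t * x)) ≤ innerDist X p q := by
    rw [innerDist]
    refine le_iInf₂ fun γ hγ => ?_
    obtain ⟨hcont, hγ0, hγ1, hγmem⟩ := hγ
    -- find s with (γ s).1 = 0
    have hcont1 : ContinuousOn (fun s => (γ s).1) (Set.Icc 0 1) :=
      (continuous_fst.comp_continuousOn hcont)
    have h01 : (0:ℝ) ≤ 1 := zero_le_one
    have hIVT := intermediate_value_Icc' h01 hcont1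
    have h0mem : (0:ℝ) ∈ Set.Icc ((γ 1).1) ((γ 0).1) := by
      rw [hγ0, hγ1]
      constructor
      · simp [hq]; exact hx0.le
      · simp [hp]; exact hx0.le
    obtain ⟨s, hs, hγs1⟩ := hIVT h0mem
    have hγsX : γ s ∈ X := hγmem s hs
    have hγs : γ s = (0, 0) := by
      have hγs1' : (γ s).1 = 0 := hγs1
      have h2 : (γ s).2 = flog (γ s).1 := hγsX.1
      rw [hγs1'] at h2
      have : flog 0 = 0 := by simp [flog]
      rw [this] at h2
      exact Prod.ext hγs1' h2
    -- use the partition 0, s, 1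
    set u : ℕ → ℝ := fun n => if n = 0 then 0 else if n = 1 then s else 1 with hu
    have humono : Monotone u := by
      apply monotone_nat_of_le_succ
      intro n
      match n with
      | 0 => simpa [hu] using hs.1
      | 1 => simpa [hu] using hs.2
      | (k+2) => simp [hu]
    have humem : ∀ i, u i ∈ Set.Icc (0:ℝ) 1 := by
      intro i
      match i with
      | 0 => simp [hu]
      | 1 => simpa [hu] using hs
      | (k+2) => simp [hu]
    have hsum := eVariationOn.sum_le (f := γ) (n := 2) humono humem
    have hsum2 : (∑ i ∈ Finset.range 2, edist (γ (u (i + 1))) (γ (u i)))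
        = edist (γ s) (γ 0) + edist (γ 1) (γ s) := by
      simp [hu, Finset.sum_range_succ]
    rw [hsum2] at hsum
    refine le_trans ?_ hsum
    -- each edist is at least t*x (second coordinates)
    have e1 : ENNReal.ofReal (t * x) ≤ edist (γ s) (γ 0) := by
      rw [hγ0, hγs, Prod.edist_eq]
      refine le_trans ?_ (le_max_right _ _)
      rw [edist_dist, Real.dist_eq]
      refine ENNReal.ofReal_le_ofReal ?_
      simp [hp, abs_of_pos (mul_pos ht0 hx0)]
    have e2 : ENNReal.ofReal (t * x) ≤ edist (γ 1) (γ s) := by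
      rw [hγ1, hγs, Prod.edist_eq]
      refine le_trans ?_ (le_max_right _ _)
      rw [edist_dist, Real.dist_eq]
      refine ENNReal.ofReal_le_ofReal ?_
      simp [hq, abs_of_pos (mul_pos ht0 hx0)]
    calc ENNReal.ofReal (2 * (t * x)) = ENNReal.ofReal (t * x) + ENNReal.ofReal (t * x) := by
          rw [← ENNReal.ofReal_add (by positivity) (by positivity)]; ring_nf
      _ ≤ edist (γ s) (γ 0) + edist (γ 1) (γ s) := add_le_add e1 e2
  refine lt_of_lt_of_le ?_ key
  rw [hnorm]
  apply ENNReal.ofReal_lt_ofReal_iff_of_nonneg (by positivity) |>.mpr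
  nlinarith [mul_pos ht0 hx0, hx0]
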